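/- Under the assumptions of the preceding setting (with $f$ having bounded derivatives up to order three in $(x,u)$, uniformly in $t$), let $z$ solve $z'(t) = \partial_x^2 f(t,x,u)[y,y] + 2\,\partial_x\partial_u f(t,x,u)[y,v] + \partial_u^2 f(t,x,u)[v,v] + \partial_x f(t,x,u) z(t)$ with $z(0)=0$, where $x = x^0$ and $y$ is the first directional derivative of the control-to-state map at $u$ in direction $v$. Then the map $s \mapsto x^s(t)$ is twice differentiable at $s = 0$ with $\frac{d^2}{ds^2} x^s(t)\big|_{s=0} = z(t)$ for each $t \in [0,T]$. -/

import Mathlib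

open MeasureTheory Topology Filter

open Set Real Filter Topology

lemma gronwall_aux {E : Type*} [NormedAddCommGroup E] [NormedSpace ℝ E]
    {g g' : ℝ → E} {K ε T : ℝ} (hK : 0 < K) (hε : 0 ≤ ε)
    (hg' : ∀ t ∈ Icc 0 T, HasDerivAt g (g' t) t)
    (h0 : g 0 = 0)
    (hb : ∀ t ∈ Ico 0 T, ‖g' t‖ ≤ K * ‖g t‖ + ε) :
    ∀ t ∈ Icc 0 T, ‖g t‖ ≤ ε * ((exp (K * T) - 1) / K) := by
  intro t ht
  have hg : ContinuousOn g (Icc 0 T) :=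
    fun x hx => (hg' x hx).continuousAt.continuousWithinAt
  have h := norm_le_gronwallBound_of_norm_deriv_right_le (δ := 0) hg
    (fun x hx => (hg' x (Ico_subset_Icc_self hx)).hasDerivWithinAt)
    (by simp [h0]) hb t ht
  rw [gronwallBound_of_K_ne_0 hK.ne'] at h
  simp only [zero_mul, zero_add, sub_zero] at h
  refine h.trans ?_
  have h1 : exp (K * t) ≤ exp (K * T) := by
    apply exp_le_exp.2; exact mul_le_mul_of_nonneg_left ht.2 hK.le
  calc ε / K * (exp (K * t) - 1) ≤ ε / K * (exp (K * T) - 1) := by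
        apply mul_le_mul_of_nonneg_left (by linarith) (by positivity)
    _ = ε * ((exp (K * T) - 1) / K) := by ring

/-- Mean value inequality: global derivative bound gives Lipschitz. -/
lemma lip_aux {E F : Type*} [NormedAddCommGroup E] [NormedSpace ℝ E]
    [NormedAddCommGroup F] [NormedSpace ℝ F]
    {g : E → F} {Dg : E → E →L[ℝ] F} (hg : ∀ x, HasFDerivAt g (Dg x) x)
    {M : ℝ} (hb : ∀ x, ‖Dg x‖ ≤ M) (p q : E) :
    ‖g p - g q‖ ≤ M * ‖p - q‖ :=
  convex_univ.norm_image_sub_le_of_norm_hasFDerivWithin_le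
    (fun x _ => (hg x).hasFDerivWithinAt) (fun x _ => hb x) (mem_univ q) (mem_univ p)

/-- First-order Taylor estimate from a Lipschitz derivative. -/
lemma taylor_aux {E F : Type*} [NormedAddCommGroup E] [NormedSpace ℝ E]
    [NormedAddCommGroup F] [NormedSpace ℝ F]
    {g : E → F} {Dg : E → E →L[ℝ] F} (hg : ∀ x, HasFDerivAt g (Dg x) x)
    {C : ℝ} (hC : 0 ≤ C) (hlip : ∀ x y, ‖Dg x - Dg y‖ ≤ C * ‖x - y‖) (p q : E) :
    ‖g p - g q - Dg q (p - q)‖ ≤ C * ‖p - q‖ * ‖p - q‖ := by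
  have h := (convex_closedBall q ‖p - q‖).norm_image_sub_le_of_norm_hasFDerivWithin_le'
    (f' := Dg) (φ := Dg q) (C := C * ‖p - q‖)
    (fun x _ => (hg x).hasFDerivWithinAt)
    (fun x hx => (hlip x q).trans (mul_le_mul_of_nonneg_left
      (by rw [Metric.mem_closedBall, dist_eq_norm] at hx; exact hx) hC))
    (Metric.mem_closedBall_self (norm_nonneg _))
    (by rw [Metric.mem_closedBall, dist_eq_norm])
  exact h

lemma pair_norm_le {E F : Type*} [NormedAddCommGroup E] [NormedAddCommGroup F]
    {a : E} {b : F} {ca cb : ℝ} (ha : ‖a‖ ≤ ca) (hb : ‖b‖ ≤ cb)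
    (h0a : 0 ≤ ca) (h0b : 0 ≤ cb) : ‖((a, b) : E × F)‖ ≤ ca + cb := by
  rw [Prod.norm_def]
  exact max_le (ha.trans (by linarith)) (hb.trans (by linarith))

lemma pair_norm_zero {E F : Type*} [NormedAddCommGroup E] [NormedAddCommGroup F]
    (a : E) : ‖((a, (0 : F)) : E × F)‖ = ‖a‖ := by
  rw [Prod.norm_def]
  simp [max_eq_left (norm_nonneg a)]

set_option maxHeartbeats 2000000 in
/-- Second-order directional differentiability of the control-to-state map
(Lemma A.2): the map `s ↦ x^s(t)` is twice differentiable at `s = 0` with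
second derivative `z(t)`, where `z` solves the second linearized equation. -/
theorem control_to_state_second_derivative (d m : ℕ) (T : ℝ) (hT : 0 < T)
    (f : ℝ → EuclideanSpace ℝ (Fin d) → EuclideanSpace ℝ (Fin m) → EuclideanSpace ℝ (Fin d))
    (D : ℝ → (EuclideanSpace ℝ (Fin d) × EuclideanSpace ℝ (Fin m)) →
      (EuclideanSpace ℝ (Fin d) × EuclideanSpace ℝ (Fin m)) →L[ℝ] EuclideanSpace ℝ (Fin d))
    (D2 : ℝ → (EuclideanSpace ℝ (Fin d) × EuclideanSpace ℝ (Fin m)) →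
      (EuclideanSpace ℝ (Fin d) × EuclideanSpace ℝ (Fin m)) →L[ℝ]
        (EuclideanSpace ℝ (Fin d) × EuclideanSpace ℝ (Fin m)) →L[ℝ] EuclideanSpace ℝ (Fin d))
    -- f is C² in (x,u) with first derivative D and second derivative D2
    (hf : ∀ t p, HasFDerivAt (fun q : EuclideanSpace ℝ (Fin d) × EuclideanSpace ℝ (Fin m) =>
      f t q.1 q.2) (D t p) p)
    (hf2 : ∀ t p, HasFDerivAt (D t) (D2 t p) p)
    -- derivatives up to order three bounded (uniformly in t)
    (hDb : ∃ M, ∀ t p, ‖D t p‖ ≤ M ∧ ‖D2 t p‖ ≤ M)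
    (hD2lip : ∃ L ≥ (0:ℝ), ∀ t p q, ‖D2 t p - D2 t q‖ ≤ L * ‖p - q‖)
    (u v : ℝ → EuclideanSpace ℝ (Fin m))
    (hu : Measurable u) (hv : Measurable v)
    (hub : ∃ M, ∀ t, ‖u t‖ ≤ M) (hvb : ∃ M, ∀ t, ‖v t‖ ≤ M)
    (x₀ : EuclideanSpace ℝ (Fin d))
    (X : ℝ → ℝ → EuclideanSpace ℝ (Fin d))
    (hX : ∀ s, ∀ t ∈ Set.Icc (0:ℝ) T, HasDerivAt (X s) (f t (X s t) (u t + s • v t)) t)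
    (hX0 : ∀ s, X s 0 = x₀)
    -- Y s t = d/ds X s t : first derivative of the control-to-state map
    (Y : ℝ → ℝ → EuclideanSpace ℝ (Fin d))
    (hY : ∀ s, ∀ t ∈ Set.Icc (0:ℝ) T, HasDerivAt (fun σ => X σ t) (Y s t) s)
    -- z solves the second linearized equation, with y = Y 0
    (z : ℝ → EuclideanSpace ℝ (Fin d))
    (hz : ∀ t ∈ Set.Icc (0:ℝ) T, HasDerivAt z
      (D2 t (X 0 t, u t) (Y 0 t, v t) (Y 0 t, v t) + D t (X 0 t, u t) (z t, 0)) t)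
    (hz0 : z 0 = 0) :
    ∀ t ∈ Set.Icc (0:ℝ) T, HasDerivAt (fun s => Y s t) (z t) 0 := by
  classical
  obtain ⟨M, hM⟩ := hDb
  obtain ⟨L, hL0, hL⟩ := hD2lip
  obtain ⟨V, hV⟩ := hvb
  have hM0 : 0 ≤ M := le_trans (norm_nonneg _) (hM 0 0).1
  have hV0 : 0 ≤ V := le_trans (norm_nonneg _) (hV 0)
  set K : ℝ := M + 1 with hKdef
  have hK : 0 < K := by rw [hKdef]; linarith
  set B : ℝ := (exp (K * T) - 1) / K with hBdef
  have hB0 : 0 ≤ B := by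
    have h1 : 1 ≤ exp (K * T) := one_le_exp (by positivity)
    rw [hBdef]; apply div_nonneg (by linarith) hK.le
  -- Lipschitz and Taylor estimates for f and D
  have fLip : ∀ t (a b : EuclideanSpace ℝ (Fin d) × EuclideanSpace ℝ (Fin m)),
      ‖f t a.1 a.2 - f t b.1 b.2‖ ≤ M * ‖a - b‖ :=
    fun t a b => lip_aux (hf t) (fun x => (hM t x).1) a b
  have DLip : ∀ t a b, ‖D t a - D t b‖ ≤ M * ‖a - b‖ :=
    fun t a b => lip_aux (hf2 t) (fun x => (hM t x).2) a b
  have fTay : ∀ t (a b : EuclideanSpace ℝ (Fin d) × EuclideanSpace ℝ (Fin m)),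
      ‖f t a.1 a.2 - f t b.1 b.2 - D t b (a - b)‖ ≤ M * ‖a - b‖ * ‖a - b‖ :=
    fun t a b => taylor_aux (hf t) hM0 (DLip t) a b
  have DTay : ∀ t a b, ‖D t a - D t b - D2 t b (a - b)‖ ≤ L * ‖a - b‖ * ‖a - b‖ :=
    fun t a b => taylor_aux (hf2 t) hL0 (hL t) a b
  -- difference of the base points
  have hpd : ∀ σ s t, ((X σ t, u t + σ • v t) :
        EuclideanSpace ℝ (Fin d) × EuclideanSpace ℝ (Fin m)) - (X s t, u t + s • v t)
      = (X σ t - X s t, (σ - s) • v t) := by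
    intro σ s t
    rw [Prod.mk_sub_mk]
    congr 1
    rw [add_sub_add_left_eq_sub, sub_smul]
  -- Step 1 : Lipschitz continuity of s ↦ X s t
  set C1 : ℝ := M * V * B with hC1def
  have hC10 : 0 ≤ C1 := by rw [hC1def]; positivity
  have XLip : ∀ σ s, ∀ t ∈ Set.Icc (0:ℝ) T, ‖X σ t - X s t‖ ≤ C1 * |σ - s| := by
    intro σ s
    have key := gronwall_aux (T := T) (K := K) (ε := M * V * |σ - s|)
      (g := fun τ => X σ τ - X s τ)
      (g' := fun τ => f τ (X σ τ) (u τ + σ • v τ) - f τ (X s τ) (u τ + s • v τ))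
      hK (by positivity)
      (fun τ hτ => (hX σ τ hτ).sub (hX s τ hτ)) (by simp [hX0]) ?_
    · intro t ht
      calc ‖X σ t - X s t‖ ≤ M * V * |σ - s| * ((exp (K * T) - 1) / K) := key t ht
        _ = C1 * |σ - s| := by rw [hC1def, hBdef]; ring
    · intro τ hτ
      have h1 := fLip τ (X σ τ, u τ + σ • v τ) (X s τ, u τ + s • v τ)
      rw [hpd] at h1
      have h2 : ‖((X σ τ - X s τ, (σ - s) • v τ) :
          EuclideanSpace ℝ (Fin d) × EuclideanSpace ℝ (Fin m))‖
          ≤ ‖X σ τ - X s τ‖ + V * |σ - s| := by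
        apply pair_norm_le le_rfl _ (norm_nonneg _) (by positivity)
        rw [norm_smul, Real.norm_eq_abs]
        calc |σ - s| * ‖v τ‖ ≤ |σ - s| * V :=
              mul_le_mul_of_nonneg_left (hV τ) (abs_nonneg _)
          _ = V * |σ - s| := mul_comm _ _
      have h3 := h1.trans (mul_le_mul_of_nonneg_left h2 hM0)
      have h4 : (0:ℝ) ≤ ‖X σ τ - X s τ‖ := norm_nonneg _
      calc ‖f τ (X σ τ) (u τ + σ • v τ) - f τ (X s τ) (u τ + s • v τ)‖
          ≤ M * (‖X σ τ - X s τ‖ + V * |σ - s|) := h3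
        _ ≤ K * ‖X σ τ - X s τ‖ + M * V * |σ - s| := by rw [hKdef]; nlinarith
  set A : ℝ := C1 + V with hAdef
  have hA0 : 0 ≤ A := by rw [hAdef]; positivity
  set C2 : ℝ := M * A * A with hC2def
  have hC20 : 0 ≤ C2 := by rw [hC2def]; positivity
  -- norm of the difference of the base points
  have hpn : ∀ σ s, ∀ t ∈ Set.Icc (0:ℝ) T, ‖((X σ t, u t + σ • v t) :
      EuclideanSpace ℝ (Fin d) × EuclideanSpace ℝ (Fin m)) - (X s t, u t + s • v t)‖
      ≤ A * |σ - s| := by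
    intro σ s t ht
    rw [hpd]
    have h2 : ‖(σ - s) • v t‖ ≤ V * |σ - s| := by
      rw [norm_smul, Real.norm_eq_abs]
      calc |σ - s| * ‖v t‖ ≤ |σ - s| * V :=
            mul_le_mul_of_nonneg_left (hV t) (abs_nonneg _)
        _ = V * |σ - s| := mul_comm _ _
    calc ‖((X σ t - X s t, (σ - s) • v t) :
        EuclideanSpace ℝ (Fin d) × EuclideanSpace ℝ (Fin m))‖
        ≤ C1 * |σ - s| + V * |σ - s| :=
          pair_norm_le (XLip σ s t ht) h2 (by positivity) (by positivity)
      _ = A * |σ - s| := by rw [hAdef]; ring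
  -- the difference quotients q and the remainders r
  set q : ℝ → ℝ → ℝ → EuclideanSpace ℝ (Fin d) :=
    fun s h τ => h⁻¹ • (X (s + h) τ - X s τ) with hqdef
  set r : ℝ → ℝ → ℝ → EuclideanSpace ℝ (Fin d) :=
    fun s h τ => h⁻¹ • (f τ (X (s + h) τ) (u τ + (s + h) • v τ) - f τ (X s τ) (u τ + s • v τ))
      - D τ (X s τ, u τ + s • v τ) (q s h τ, v τ) with hrdef
  have hq0 : ∀ s h, q s h 0 = 0 := by
    intro s h; rw [hqdef]; simp [hX0]
  have qb : ∀ s h, h ≠ 0 → ∀ t ∈ Set.Icc (0:ℝ) T, ‖q s h t‖ ≤ C1 := by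
    intro s h hh t ht
    have h1 : ‖X (s + h) t - X s t‖ ≤ C1 * |h| := by
      have := XLip (s + h) s t ht
      rwa [add_sub_cancel_left] at this
    rw [hqdef]
    simp only
    rw [norm_smul, Real.norm_eq_abs, abs_inv]
    have hh' : 0 < |h| := abs_pos.2 hh
    calc |h|⁻¹ * ‖X (s + h) t - X s t‖ ≤ |h|⁻¹ * (C1 * |h|) := by
          apply mul_le_mul_of_nonneg_left h1 (by positivity)
      _ = C1 := by field_simp
  have qlim : ∀ s, ∀ t ∈ Set.Icc (0:ℝ) T,
      Filter.Tendsto (fun h => q s h t) (𝓝[≠] (0:ℝ)) (𝓝 (Y s t)) := by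
    intro s t ht
    have hslope := hasDerivAt_iff_tendsto_slope.1 (hY s t ht)
    have hmap : Filter.Tendsto (fun h : ℝ => s + h) (𝓝[≠] (0:ℝ)) (𝓝[≠] s) := by
      apply tendsto_nhdsWithin_of_tendsto_nhds_of_eventually_within
      · exact (((continuous_add_left s).tendsto' 0 s (by simp))).mono_left
          nhdsWithin_le_nhds
      · filter_upwards [eventually_mem_nhdsWithin] with h hh
        simp only [Set.mem_compl_iff, Set.mem_singleton_iff] at hh ⊢
        intro hcon
        exact hh (by linarith)
    have := hslope.comp hmap
    apply this.congr
    intro h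
    simp only [Function.comp_apply, slope_def_module, add_sub_cancel_left]
    exact rfl
  have hYb : ∀ s, ∀ t ∈ Set.Icc (0:ℝ) T, ‖Y s t‖ ≤ C1 := by
    intro s t ht
    apply le_of_tendsto (qlim s t ht).norm
    filter_upwards [eventually_mem_nhdsWithin] with h hh
    exact qb s h hh t ht
  -- q satisfies a perturbed linear ODE
  have qderiv : ∀ s h, ∀ t ∈ Set.Icc (0:ℝ) T, HasDerivAt (fun τ => q s h τ)
      (D t (X s t, u t + s • v t) (q s h t, v t) + r s h t) t := by
    intro s h t ht
    have h1 : HasDerivAt (fun τ => q s h τ)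
        (h⁻¹ • (f t (X (s + h) t) (u t + (s + h) • v t) - f t (X s t) (u t + s • v t))) t := by
      rw [hqdef]
      exact ((hX (s + h) t ht).sub (hX s t ht)).const_smul h⁻¹
    have h2 : D t (X s t, u t + s • v t) (q s h t, v t) + r s h t
        = h⁻¹ • (f t (X (s + h) t) (u t + (s + h) • v t) - f t (X s t) (u t + s • v t)) := by
      rw [hrdef]
      exact add_sub_cancel _ _
    rw [h2]
    exact h1
  -- bound on the remainder
  have rb : ∀ s h, h ≠ 0 → ∀ t ∈ Set.Icc (0:ℝ) T, ‖r s h t‖ ≤ C2 * |h| := by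
    intro s h hh t ht
    have hh' : 0 < |h| := abs_pos.2 hh
    have key : r s h t = h⁻¹ • (f t (X (s + h) t) (u t + (s + h) • v t)
        - f t (X s t) (u t + s • v t)
        - D t (X s t, u t + s • v t) (((X (s + h) t, u t + (s + h) • v t) :
            EuclideanSpace ℝ (Fin d) × EuclideanSpace ℝ (Fin m)) - (X s t, u t + s • v t))) := by
      have harg : ((q s h t, v t) : EuclideanSpace ℝ (Fin d) × EuclideanSpace ℝ (Fin m))
          = h⁻¹ • (((X (s + h) t, u t + (s + h) • v t) :
            EuclideanSpace ℝ (Fin d) × EuclideanSpace ℝ (Fin m)) - (X s t, u t + s • v t)) := by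
        rw [hpd, add_sub_cancel_left, Prod.smul_mk, smul_smul, inv_mul_cancel₀ hh, one_smul,
          hqdef]
      rw [hrdef]
      simp only
      rw [harg, _root_.map_smul, ← smul_sub]
    have hTay := fTay t (X (s + h) t, u t + (s + h) • v t) (X s t, u t + s • v t)
    have hpn' : ‖((X (s + h) t, u t + (s + h) • v t) :
        EuclideanSpace ℝ (Fin d) × EuclideanSpace ℝ (Fin m)) - (X s t, u t + s • v t)‖
        ≤ A * |h| := by
      have := hpn (s + h) s t ht
      rwa [add_sub_cancel_left] at this
    have hTay2 : ‖f t (X (s + h) t) (u t + (s + h) • v t) - f t (X s t) (u t + s • v t)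
        - D t (X s t, u t + s • v t) (((X (s + h) t, u t + (s + h) • v t) :
            EuclideanSpace ℝ (Fin d) × EuclideanSpace ℝ (Fin m)) - (X s t, u t + s • v t))‖
        ≤ M * (A * |h|) * (A * |h|) := by
      refine hTay.trans ?_
      exact mul_le_mul (mul_le_mul_of_nonneg_left hpn' hM0) hpn' (norm_nonneg _)
        (mul_nonneg hM0 (mul_nonneg hA0 (abs_nonneg _)))
    rw [key, norm_smul, Real.norm_eq_abs, abs_inv]
    calc |h|⁻¹ * ‖_‖ ≤ |h|⁻¹ * (M * (A * |h|) * (A * |h|)) := by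
          apply mul_le_mul_of_nonneg_left hTay2 (by positivity)
      _ = C2 * |h| := by rw [hC2def]; field_simp
  -- Cauchy estimate for the difference quotients
  have qCauchy : ∀ s h h', h ≠ 0 → h' ≠ 0 → ∀ t ∈ Set.Icc (0:ℝ) T,
      ‖q s h t - q s h' t‖ ≤ (C2 * |h| + C2 * |h'|) * B := by
    intro s h h' hh hh' t ht
    have key := gronwall_aux (T := T) (K := K) (ε := C2 * |h| + C2 * |h'|)
      (g := fun τ => q s h τ - q s h' τ)
      (g' := fun τ => (D τ (X s τ, u τ + s • v τ) (q s h τ, v τ) + r s h τ)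
        - (D τ (X s τ, u τ + s • v τ) (q s h' τ, v τ) + r s h' τ))
      hK (by positivity)
      (fun τ hτ => (qderiv s h τ hτ).sub (qderiv s h' τ hτ))
      (by simp [hq0]) ?_
    · calc ‖q s h t - q s h' t‖ ≤ (C2 * |h| + C2 * |h'|) * ((exp (K * T) - 1) / K) :=
            key t ht
        _ = (C2 * |h| + C2 * |h'|) * B := by rw [hBdef]
    · intro τ hτ
      beta_reduce
      have hτ' : τ ∈ Set.Icc (0:ℝ) T := Set.Ico_subset_Icc_self hτ
      have hXY : ((q s h τ, v τ) : EuclideanSpace ℝ (Fin d) × EuclideanSpace ℝ (Fin m))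
          - (q s h' τ, v τ) = (q s h τ - q s h' τ, 0) := by
        rw [Prod.mk_sub_mk, sub_self]
      have e1 : (D τ (X s τ, u τ + s • v τ) (q s h τ, v τ) + r s h τ)
          - (D τ (X s τ, u τ + s • v τ) (q s h' τ, v τ) + r s h' τ)
          = D τ (X s τ, u τ + s • v τ) (q s h τ - q s h' τ, 0) + (r s h τ - r s h' τ) := by
        rw [← hXY, map_sub]; abel
      rw [e1]
      have b1 : ‖D τ (X s τ, u τ + s • v τ) ((q s h τ - q s h' τ, 0) :
          EuclideanSpace ℝ (Fin d) × EuclideanSpace ℝ (Fin m))‖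
          ≤ M * ‖q s h τ - q s h' τ‖ := by
        calc ‖D τ (X s τ, u τ + s • v τ) ((q s h τ - q s h' τ, 0) :
            EuclideanSpace ℝ (Fin d) × EuclideanSpace ℝ (Fin m))‖
            ≤ ‖D τ (X s τ, u τ + s • v τ)‖ * ‖((q s h τ - q s h' τ, 0) :
              EuclideanSpace ℝ (Fin d) × EuclideanSpace ℝ (Fin m))‖ :=
              ContinuousLinearMap.le_opNorm _ _
          _ = ‖D τ (X s τ, u τ + s • v τ)‖ * ‖q s h τ - q s h' τ‖ := by
              rw [pair_norm_zero]
          _ ≤ M * ‖q s h τ - q s h' τ‖ :=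
              mul_le_mul_of_nonneg_right (hM τ _).1 (norm_nonneg _)
      have b2 : ‖r s h τ - r s h' τ‖ ≤ C2 * |h| + C2 * |h'| :=
        (norm_sub_le _ _).trans (add_le_add (rb s h hh τ hτ') (rb s h' hh' τ hτ'))
      have hg0 : (0:ℝ) ≤ ‖q s h τ - q s h' τ‖ := norm_nonneg _
      calc ‖D τ (X s τ, u τ + s • v τ) ((q s h τ - q s h' τ, 0) :
          EuclideanSpace ℝ (Fin d) × EuclideanSpace ℝ (Fin m)) + (r s h τ - r s h' τ)‖
          ≤ M * ‖q s h τ - q s h' τ‖ + (C2 * |h| + C2 * |h'|) :=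
            (norm_add_le _ _).trans (add_le_add b1 b2)
        _ ≤ K * ‖q s h τ - q s h' τ‖ + (C2 * |h| + C2 * |h'|) := by
            rw [hKdef]; nlinarith
  -- q s h t approximates Y s t to order |h|
  have qY : ∀ s h, h ≠ 0 → ∀ t ∈ Set.Icc (0:ℝ) T,
      ‖q s h t - Y s t‖ ≤ C2 * |h| * B := by
    intro s h hh t ht
    have l1 : Filter.Tendsto (fun h' => ‖q s h t - q s h' t‖) (𝓝[≠] (0:ℝ))
        (𝓝 ‖q s h t - Y s t‖) := (tendsto_const_nhds.sub (qlim s t ht)).norm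
    have l2 : Filter.Tendsto (fun h' : ℝ => (C2 * |h| + C2 * |h'|) * B) (𝓝[≠] (0:ℝ))
        (𝓝 (C2 * |h| * B)) := by
      have hc : Continuous (fun h' : ℝ => (C2 * |h| + C2 * |h'|) * B) :=
        (continuous_const.add (continuous_const.mul continuous_abs)).mul continuous_const
      exact (hc.tendsto' 0 _ (by simp)).mono_left nhdsWithin_le_nhds
    refine le_of_tendsto_of_tendsto l1 l2 ?_
    filter_upwards [eventually_mem_nhdsWithin] with h' hh'
    exact qCauchy s h h' hh hh' t ht
  -- norm bound on (q s h t, v t)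
  have hQn : ∀ s h, h ≠ 0 → ∀ t ∈ Set.Icc (0:ℝ) T,
      ‖((q s h t, v t) : EuclideanSpace ℝ (Fin d) × EuclideanSpace ℝ (Fin m))‖ ≤ A := by
    intro s h hh t ht
    have := pair_norm_le (qb s h hh t ht) (hV t) hC10 hV0
    rwa [← hAdef] at this
  -- first-order difference estimate
  have qdiffLip : ∀ s h, h ≠ 0 → ∀ t ∈ Set.Icc (0:ℝ) T,
      ‖q s h t - q 0 h t‖ ≤ (C2 * |s| + 2 * (C2 * |h|)) * B := by
    intro s h hh t ht
    have key := gronwall_aux (T := T) (K := K) (ε := C2 * |s| + 2 * (C2 * |h|))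
      (g := fun τ => q s h τ - q 0 h τ)
      (g' := fun τ => (D τ (X s τ, u τ + s • v τ) (q s h τ, v τ) + r s h τ)
        - (D τ (X 0 τ, u τ + (0:ℝ) • v τ) (q 0 h τ, v τ) + r 0 h τ))
      hK (by positivity)
      (fun τ hτ => (qderiv s h τ hτ).sub (qderiv 0 h τ hτ))
      (by simp [hq0]) ?_
    · calc ‖q s h t - q 0 h t‖
          ≤ (C2 * |s| + 2 * (C2 * |h|)) * ((exp (K * T) - 1) / K) := key t ht
        _ = (C2 * |s| + 2 * (C2 * |h|)) * B := by rw [hBdef]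
    · intro τ hτ
      beta_reduce
      have hτ' : τ ∈ Set.Icc (0:ℝ) T := Set.Ico_subset_Icc_self hτ
      have hXY : ((q s h τ, v τ) : EuclideanSpace ℝ (Fin d) × EuclideanSpace ℝ (Fin m))
          - (q 0 h τ, v τ) = (q s h τ - q 0 h τ, 0) := by
        rw [Prod.mk_sub_mk, sub_self]
      have e1 : (D τ (X s τ, u τ + s • v τ) (q s h τ, v τ) + r s h τ)
          - (D τ (X 0 τ, u τ + (0:ℝ) • v τ) (q 0 h τ, v τ) + r 0 h τ)
          = (D τ (X s τ, u τ + s • v τ) - D τ (X 0 τ, u τ + (0:ℝ) • v τ)) (q s h τ, v τ)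
            + D τ (X 0 τ, u τ + (0:ℝ) • v τ) (q s h τ - q 0 h τ, 0)
            + (r s h τ - r 0 h τ) := by
        rw [← hXY, map_sub, ContinuousLinearMap.sub_apply]; abel
      rw [e1]
      have b1 : ‖(D τ (X s τ, u τ + s • v τ) - D τ (X 0 τ, u τ + (0:ℝ) • v τ))
          (q s h τ, v τ)‖ ≤ C2 * |s| := by
        have hD := DLip τ (X s τ, u τ + s • v τ) (X 0 τ, u τ + (0:ℝ) • v τ)
        have hp := hpn s 0 τ hτ'
        rw [sub_zero] at hp
        refine (ContinuousLinearMap.le_opNorm _ _).trans ?_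
        refine le_trans (mul_le_mul (hD.trans (mul_le_mul_of_nonneg_left hp hM0))
          (hQn s h hh τ hτ') (norm_nonneg _)
          (mul_nonneg hM0 (mul_nonneg hA0 (abs_nonneg _))))
          (le_of_eq (by rw [hC2def]; ring))
      have b2 : ‖D τ (X 0 τ, u τ + (0:ℝ) • v τ) ((q s h τ - q 0 h τ, 0) :
          EuclideanSpace ℝ (Fin d) × EuclideanSpace ℝ (Fin m))‖
          ≤ M * ‖q s h τ - q 0 h τ‖ := by
        calc ‖D τ (X 0 τ, u τ + (0:ℝ) • v τ) ((q s h τ - q 0 h τ, 0) :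
            EuclideanSpace ℝ (Fin d) × EuclideanSpace ℝ (Fin m))‖
            ≤ ‖D τ (X 0 τ, u τ + (0:ℝ) • v τ)‖ * ‖((q s h τ - q 0 h τ, 0) :
              EuclideanSpace ℝ (Fin d) × EuclideanSpace ℝ (Fin m))‖ :=
              ContinuousLinearMap.le_opNorm _ _
          _ = ‖D τ (X 0 τ, u τ + (0:ℝ) • v τ)‖ * ‖q s h τ - q 0 h τ‖ := by
              rw [pair_norm_zero]
          _ ≤ M * ‖q s h τ - q 0 h τ‖ :=
              mul_le_mul_of_nonneg_right (hM τ _).1 (norm_nonneg _)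
      have b3 : ‖r s h τ - r 0 h τ‖ ≤ 2 * (C2 * |h|) := by
        have := (norm_sub_le _ _).trans (add_le_add (rb s h hh τ hτ') (rb 0 h hh τ hτ'))
        linarith
      have hg0 : (0:ℝ) ≤ ‖q s h τ - q 0 h τ‖ := norm_nonneg _
      calc ‖(D τ (X s τ, u τ + s • v τ) - D τ (X 0 τ, u τ + (0:ℝ) • v τ)) (q s h τ, v τ)
            + D τ (X 0 τ, u τ + (0:ℝ) • v τ) (q s h τ - q 0 h τ, 0)
            + (r s h τ - r 0 h τ)‖
          ≤ C2 * |s| + M * ‖q s h τ - q 0 h τ‖ + 2 * (C2 * |h|) := by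
            refine (norm_add_le _ _).trans ?_
            refine add_le_add ((norm_add_le _ _).trans (add_le_add b1 b2)) b3
        _ ≤ K * ‖q s h τ - q 0 h τ‖ + (C2 * |s| + 2 * (C2 * |h|)) := by
            rw [hKdef]; nlinarith
  -- first-order estimates in the limit h → 0
  have YLip0 : ∀ s, ∀ t ∈ Set.Icc (0:ℝ) T, ‖Y s t - Y 0 t‖ ≤ C2 * |s| * B := by
    intro s t ht
    have l1 : Filter.Tendsto (fun h => ‖q s h t - q 0 h t‖) (𝓝[≠] (0:ℝ))
        (𝓝 ‖Y s t - Y 0 t‖) := ((qlim s t ht).sub (qlim 0 t ht)).norm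
    have l2 : Filter.Tendsto (fun h : ℝ => (C2 * |s| + 2 * (C2 * |h|)) * B) (𝓝[≠] (0:ℝ))
        (𝓝 (C2 * |s| * B)) := by
      have hc : Continuous (fun h : ℝ => (C2 * |s| + 2 * (C2 * |h|)) * B) :=
        (continuous_const.add (continuous_const.mul
          (continuous_const.mul continuous_abs))).mul continuous_const
      exact (hc.tendsto' 0 _ (by simp)).mono_left nhdsWithin_le_nhds
    refine le_of_tendsto_of_tendsto l1 l2 ?_
    filter_upwards [eventually_mem_nhdsWithin] with h hh
    exact qdiffLip s h hh t ht
  -- first-order Taylor expansion of X in the parameter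
  have XTay : ∀ s, ∀ t ∈ Set.Icc (0:ℝ) T,
      ‖X s t - X 0 t - s • Y 0 t‖ ≤ C2 * B * (|s| * |s|) := by
    intro s t ht
    rcases eq_or_ne s 0 with rfl | hs
    · simp
    · have h1 := qY 0 s hs t ht
      have h2 : X s t - X 0 t - s • Y 0 t = s • (q 0 s t - Y 0 t) := by
        rw [hqdef]
        simp only
        rw [smul_sub, smul_smul, mul_inv_cancel₀ hs, one_smul, zero_add]
      rw [h2, norm_smul, Real.norm_eq_abs]
      calc |s| * ‖q 0 s t - Y 0 t‖ ≤ |s| * (C2 * |s| * B) :=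
            mul_le_mul_of_nonneg_left h1 (abs_nonneg _)
        _ = C2 * B * (|s| * |s|) := by ring
  -- second-order Grönwall estimate
  have GB : ∀ s h, h ≠ 0 → ∀ t ∈ Set.Icc (0:ℝ) T,
      ‖q s h t - q 0 h t - s • z t‖
      ≤ ((L * (A * |s|) * (A * |s|) * A + M * (C2 * B * (|s| * |s|)) * A
          + |s| * (M * A * (C2 * |s| * B)))
        + (|s| * (M * A * (C2 * B)) + 2 * C2) * |h|) * B := by
    intro s h hh t ht
    have hc00 : (0:ℝ) ≤ L * (A * |s|) * (A * |s|) * A + M * (C2 * B * (|s| * |s|)) * A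
        + |s| * (M * A * (C2 * |s| * B)) := by
      apply_rules [add_nonneg, mul_nonneg, abs_nonneg, hL0, hA0, hM0, hC20, hB0]
    have hc10 : (0:ℝ) ≤ |s| * (M * A * (C2 * B)) + 2 * C2 := by
      apply_rules [add_nonneg, mul_nonneg, abs_nonneg, hM0, hA0, hC20, hB0]
      norm_num
    have key := gronwall_aux (T := T) (K := K)
      (ε := (L * (A * |s|) * (A * |s|) * A + M * (C2 * B * (|s| * |s|)) * A
          + |s| * (M * A * (C2 * |s| * B)))
        + (|s| * (M * A * (C2 * B)) + 2 * C2) * |h|)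
      (g := fun τ => q s h τ - q 0 h τ - s • z τ)
      (g' := fun τ => (D τ (X s τ, u τ + s • v τ) (q s h τ, v τ) + r s h τ)
        - (D τ (X 0 τ, u τ) (q 0 h τ, v τ) + r 0 h τ)
        - s • (D2 τ (X 0 τ, u τ) (Y 0 τ, v τ) (Y 0 τ, v τ) + D τ (X 0 τ, u τ) (z τ, 0)))
      hK (by apply_rules [add_nonneg, mul_nonneg, abs_nonneg])
      (fun τ hτ => by
        have h0' := qderiv 0 h τ hτ
        simp only [zero_smul, add_zero] at h0'
        exact ((qderiv s h τ hτ).sub h0').sub ((hz τ hτ).const_smul s))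
      (by simp [hq0, hz0]) ?_
    · calc ‖q s h t - q 0 h t - s • z t‖
          ≤ _ * ((exp (K * T) - 1) / K) := key t ht
        _ = _ * B := by rw [hBdef]
    · intro τ hτ
      beta_reduce
      have hτ' : τ ∈ Set.Icc (0:ℝ) T := Set.Ico_subset_Icc_self hτ
      -- pair identities
      have hQy : ((q s h τ, v τ) : EuclideanSpace ℝ (Fin d) × EuclideanSpace ℝ (Fin m))
          - (Y 0 τ, v τ) = (q s h τ - Y 0 τ, 0) := by
        rw [Prod.mk_sub_mk, sub_self]
      have hQQ : ((q s h τ, v τ) : EuclideanSpace ℝ (Fin d) × EuclideanSpace ℝ (Fin m))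
          - (q 0 h τ, v τ) = (q s h τ - q 0 h τ, 0) := by
        rw [Prod.mk_sub_mk, sub_self]
      have hGz : ((q s h τ - q 0 h τ, 0) :
            EuclideanSpace ℝ (Fin d) × EuclideanSpace ℝ (Fin m)) - s • (z τ, 0)
          = (q s h τ - q 0 h τ - s • z τ, 0) := by
        rw [Prod.smul_mk, Prod.mk_sub_mk, smul_zero, sub_zero]
      have hE : ((X s τ, u τ + s • v τ) :
            EuclideanSpace ℝ (Fin d) × EuclideanSpace ℝ (Fin m)) - (X 0 τ, u τ)
            - s • (Y 0 τ, v τ)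
          = (X s τ - X 0 τ - s • Y 0 τ, 0) := by
        rw [Prod.mk_sub_mk, Prod.smul_mk, Prod.mk_sub_mk]
        simp only [Prod.mk.injEq]
        exact ⟨trivial, by abel⟩
      -- decomposition of the derivative
      have e1 : (D τ (X s τ, u τ + s • v τ) (q s h τ, v τ) + r s h τ)
          - (D τ (X 0 τ, u τ) (q 0 h τ, v τ) + r 0 h τ)
          - s • (D2 τ (X 0 τ, u τ) (Y 0 τ, v τ) (Y 0 τ, v τ) + D τ (X 0 τ, u τ) (z τ, 0))
          = (D τ (X s τ, u τ + s • v τ) - D τ (X 0 τ, u τ)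
              - D2 τ (X 0 τ, u τ) (((X s τ, u τ + s • v τ) :
                EuclideanSpace ℝ (Fin d) × EuclideanSpace ℝ (Fin m)) - (X 0 τ, u τ)))
              (q s h τ, v τ)
            + (D2 τ (X 0 τ, u τ) (((X s τ, u τ + s • v τ) :
                EuclideanSpace ℝ (Fin d) × EuclideanSpace ℝ (Fin m)) - (X 0 τ, u τ)
                - s • (Y 0 τ, v τ))) (q s h τ, v τ)
            + s • (D2 τ (X 0 τ, u τ) (Y 0 τ, v τ) (q s h τ - Y 0 τ, 0))
            + D τ (X 0 τ, u τ) (q s h τ - q 0 h τ - s • z τ, 0)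
            + (r s h τ - r 0 h τ) := by
        rw [← hGz, ← hQQ, ← hQy]
        simp only [map_sub, _root_.map_smul, ContinuousLinearMap.sub_apply,
          ContinuousLinearMap.smul_apply, smul_add, smul_sub]
        abel
      rw [e1]
      -- bounds on the pieces
      have hQA := hQn s h hh τ hτ'
      have hyvA : ‖((Y 0 τ, v τ) :
          EuclideanSpace ℝ (Fin d) × EuclideanSpace ℝ (Fin m))‖ ≤ A := by
        have := pair_norm_le (hYb 0 τ hτ') (hV τ) hC10 hV0
        rwa [← hAdef] at this
      have hp : ‖((X s τ, u τ + s • v τ) :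
          EuclideanSpace ℝ (Fin d) × EuclideanSpace ℝ (Fin m)) - (X 0 τ, u τ)‖
          ≤ A * |s| := by
        have := hpn s 0 τ hτ'
        simp only [zero_smul, add_zero, sub_zero] at this
        exact this
      have b1 : ‖(D τ (X s τ, u τ + s • v τ) - D τ (X 0 τ, u τ)
          - D2 τ (X 0 τ, u τ) (((X s τ, u τ + s • v τ) :
            EuclideanSpace ℝ (Fin d) × EuclideanSpace ℝ (Fin m)) - (X 0 τ, u τ)))
          (q s h τ, v τ)‖ ≤ L * (A * |s|) * (A * |s|) * A := by
        refine (ContinuousLinearMap.le_opNorm _ _).trans ?_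
        have hD := DTay τ (X s τ, u τ + s • v τ) (X 0 τ, u τ)
        have h1 : ‖D τ (X s τ, u τ + s • v τ) - D τ (X 0 τ, u τ)
            - D2 τ (X 0 τ, u τ) (((X s τ, u τ + s • v τ) :
              EuclideanSpace ℝ (Fin d) × EuclideanSpace ℝ (Fin m)) - (X 0 τ, u τ))‖
            ≤ L * (A * |s|) * (A * |s|) :=
          hD.trans (mul_le_mul (mul_le_mul_of_nonneg_left hp hL0) hp (norm_nonneg _)
            (mul_nonneg hL0 (mul_nonneg hA0 (abs_nonneg _))))
        exact mul_le_mul h1 hQA (norm_nonneg _) (by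
          apply_rules [mul_nonneg, abs_nonneg, hL0, hA0])
      have b2 : ‖(D2 τ (X 0 τ, u τ) (((X s τ, u τ + s • v τ) :
            EuclideanSpace ℝ (Fin d) × EuclideanSpace ℝ (Fin m)) - (X 0 τ, u τ)
            - s • (Y 0 τ, v τ))) (q s h τ, v τ)‖
          ≤ M * (C2 * B * (|s| * |s|)) * A := by
        refine (ContinuousLinearMap.le_opNorm _ _).trans ?_
        have h1 : ‖D2 τ (X 0 τ, u τ) (((X s τ, u τ + s • v τ) :
            EuclideanSpace ℝ (Fin d) × EuclideanSpace ℝ (Fin m)) - (X 0 τ, u τ)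
            - s • (Y 0 τ, v τ))‖ ≤ M * (C2 * B * (|s| * |s|)) := by
          refine (ContinuousLinearMap.le_opNorm _ _).trans ?_
          rw [hE, pair_norm_zero]
          exact mul_le_mul (hM τ _).2 (XTay s τ hτ') (norm_nonneg _) hM0
        exact mul_le_mul h1 hQA (norm_nonneg _)
          (by apply_rules [mul_nonneg, abs_nonneg, hM0, hC20, hB0])
      have b3 : ‖s • (D2 τ (X 0 τ, u τ) (Y 0 τ, v τ) (q s h τ - Y 0 τ, 0))‖
          ≤ |s| * (M * A * (C2 * |h| * B + C2 * |s| * B)) := by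
        rw [norm_smul, Real.norm_eq_abs]
        apply mul_le_mul_of_nonneg_left _ (abs_nonneg _)
        refine (ContinuousLinearMap.le_opNorm _ _).trans ?_
        rw [pair_norm_zero]
        have h1 : ‖D2 τ (X 0 τ, u τ) (Y 0 τ, v τ)‖ ≤ M * A :=
          (ContinuousLinearMap.le_opNorm _ _).trans
            (mul_le_mul (hM τ _).2 hyvA (norm_nonneg _) hM0)
        have h2 : ‖q s h τ - Y 0 τ‖ ≤ C2 * |h| * B + C2 * |s| * B := by
          calc ‖q s h τ - Y 0 τ‖ ≤ ‖q s h τ - Y s τ‖ + ‖Y s τ - Y 0 τ‖ := by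
                have := norm_sub_le_norm_sub_add_norm_sub (q s h τ) (Y s τ) (Y 0 τ)
                exact this
            _ ≤ C2 * |h| * B + C2 * |s| * B :=
                add_le_add (qY s h hh τ hτ') (YLip0 s τ hτ')
        exact mul_le_mul h1 h2 (norm_nonneg _) (mul_nonneg hM0 hA0)
      have b4 : ‖D τ (X 0 τ, u τ) ((q s h τ - q 0 h τ - s • z τ, 0) :
          EuclideanSpace ℝ (Fin d) × EuclideanSpace ℝ (Fin m))‖
          ≤ M * ‖q s h τ - q 0 h τ - s • z τ‖ := by
        refine (ContinuousLinearMap.le_opNorm _ _).trans ?_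
        rw [pair_norm_zero]
        exact mul_le_mul_of_nonneg_right (hM τ _).1 (norm_nonneg _)
      have b5 : ‖r s h τ - r 0 h τ‖ ≤ 2 * (C2 * |h|) := by
        have := (norm_sub_le _ _).trans (add_le_add (rb s h hh τ hτ') (rb 0 h hh τ hτ'))
        linarith
      have hg0 : (0:ℝ) ≤ ‖q s h τ - q 0 h τ - s • z τ‖ := norm_nonneg _
      refine le_trans ((norm_add_le _ _).trans (add_le_add ((norm_add_le _ _).trans
        (add_le_add ((norm_add_le _ _).trans (add_le_add ((norm_add_le _ _).trans
          (add_le_add b1 b2)) b3)) b4)) b5)) ?_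
      rw [hKdef]
      nlinarith [abs_nonneg s, abs_nonneg h]
  -- second-order Taylor estimate for Y
  have Ytay : ∀ s, ∀ t ∈ Set.Icc (0:ℝ) T, ‖Y s t - Y 0 t - s • z t‖
      ≤ ((L * A * A * A + M * (C2 * B) * A + M * A * (C2 * B)) * B) * (|s| * |s|) := by
    intro s t ht
    have l1 : Filter.Tendsto (fun h => ‖q s h t - q 0 h t - s • z t‖) (𝓝[≠] (0:ℝ))
        (𝓝 ‖Y s t - Y 0 t - s • z t‖) :=
      (((qlim s t ht).sub (qlim 0 t ht)).sub tendsto_const_nhds).norm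
    have l2 : Filter.Tendsto (fun h : ℝ =>
        ((L * (A * |s|) * (A * |s|) * A + M * (C2 * B * (|s| * |s|)) * A
          + |s| * (M * A * (C2 * |s| * B)))
        + (|s| * (M * A * (C2 * B)) + 2 * C2) * |h|) * B) (𝓝[≠] (0:ℝ))
        (𝓝 (((L * A * A * A + M * (C2 * B) * A + M * A * (C2 * B)) * B) * (|s| * |s|))) := by
      have hc : Continuous (fun h : ℝ =>
          ((L * (A * |s|) * (A * |s|) * A + M * (C2 * B * (|s| * |s|)) * A
            + |s| * (M * A * (C2 * |s| * B)))
          + (|s| * (M * A * (C2 * B)) + 2 * C2) * |h|) * B) :=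
        (continuous_const.add (continuous_const.mul continuous_abs)).mul continuous_const
      refine (hc.tendsto' 0 _ ?_).mono_left nhdsWithin_le_nhds
      simp only [abs_zero, mul_zero, add_zero]
      ring
    refine le_of_tendsto_of_tendsto l1 l2 ?_
    filter_upwards [eventually_mem_nhdsWithin] with h hh
    exact GB s h hh t ht
  -- conclusion
  intro t ht
  rw [hasDerivAt_iff_tendsto_slope]
  rw [tendsto_iff_norm_sub_tendsto_zero]
  have hsq : ∀ s : ℝ, s ≠ 0 → ‖slope (fun σ => Y σ t) 0 s - z t‖
      ≤ ((L * A * A * A + M * (C2 * B) * A + M * A * (C2 * B)) * B) * |s| := by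
    intro s hs
    have h1 : slope (fun σ => Y σ t) 0 s - z t = s⁻¹ • (Y s t - Y 0 t - s • z t) := by
      rw [slope_def_module, sub_zero]
      rw [smul_sub (s⁻¹) (Y s t - Y 0 t) (s • z t), smul_smul, inv_mul_cancel₀ hs, one_smul]
    rw [h1, norm_smul, Real.norm_eq_abs, abs_inv]
    have hs' : (0:ℝ) < |s| := abs_pos.2 hs
    calc |s|⁻¹ * ‖Y s t - Y 0 t - s • z t‖
        ≤ |s|⁻¹ * (((L * A * A * A + M * (C2 * B) * A + M * A * (C2 * B)) * B) * (|s| * |s|)) :=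
          mul_le_mul_of_nonneg_left (Ytay s t ht) (by positivity)
      _ = ((L * A * A * A + M * (C2 * B) * A + M * A * (C2 * B)) * B) * |s| := by
          rw [show |s|⁻¹ * (((L * A * A * A + M * (C2 * B) * A + M * A * (C2 * B)) * B)
              * (|s| * |s|)) = ((L * A * A * A + M * (C2 * B) * A + M * A * (C2 * B)) * B)
              * ((|s|⁻¹ * |s|) * |s|) from by ring, inv_mul_cancel₀ hs'.ne', one_mul]
  apply squeeze_zero' (f := fun s => ‖slope (fun σ => Y σ t) 0 s - z t‖)
    (g := fun s => ((L * A * A * A + M * (C2 * B) * A + M * A * (C2 * B)) * B) * |s|)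
    (Filter.Eventually.of_forall (fun s => norm_nonneg _))
  · filter_upwards [eventually_mem_nhdsWithin] with s hs
    exact hsq s hs
  · have hc : Continuous (fun s : ℝ =>
        ((L * A * A * A + M * (C2 * B) * A + M * A * (C2 * B)) * B) * |s|) :=
      continuous_const.mul continuous_abs
    exact (hc.tendsto' 0 0 (by simp)).mono_left nhdsWithin_le_nhds
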